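/- Let M : [0,∞)² → [0,1] be nondecreasing in each argument, continuous for h > 0, and differentiable a.e., satisfying the differential inequalities ∂M/∂β ≤ φ·M·∂M/∂h and M ≤ h·∂M/∂h + ψ·M·∂M/∂β + M², a.e. on a rectangle [β₀, β₁] × (0, h₁], with φ, ψ bounded above by constants Φ, Ψ on this rectangle, and M ≤ 1/2 there. If lim_{h→0+} M(β₀,h)/h = ∞, then there are constants c₁, c₂ > 0 such that M(β₀,h) ≥ c₁·h^{1/2} for small h > 0 and M(β, 0+) ≥ c₂·(β - β₀) for β ∈ [β₀, β₁]. -/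

import Mathlib

open Filter MeasureTheory Set
open scoped ENNReal

namespace AB17

lemma deriv_nonneg_of_monotoneOn {f : ℝ → ℝ} {x d : ℝ}
    (hm : MonotoneOn f (Set.Ici 0)) (hx : 0 < x) (hd : HasDerivAt f d x) : 0 ≤ d := by
  have h := hasDerivAt_iff_tendsto_slope.1 hd
  have h' : Tendsto (slope f x) (nhdsWithin x (Set.Ioi x)) (nhds d) :=
    h.mono_left (nhdsWithin_mono _ (fun y hy => ne_of_gt hy))
  refine ge_of_tendsto h' ?_
  filter_upwards [self_mem_nhdsWithin] with y hy
  have hfx : f x ≤ f y := hm hx.le (hx.trans hy).le (le_of_lt hy)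
  have : (0:ℝ) < y - x := sub_pos.2 hy
  rw [slope_def_field]
  exact div_nonneg (by linarith) this.le

lemma stieltjes_aux {f : ℝ → ℝ} {a b : ℝ} (hab : a ≤ b)
    (hm : MonotoneOn f (Set.Icc a b)) (hc : ContinuousOn f (Set.Icc a b)) :
    ∃ S : StieltjesFunction ℝ,
      (∀ᵐ x, x ∈ Set.Ioo a b →
        HasDerivAt f ((S.measure.rnDeriv volume x).toReal) x ∧ S.measure.rnDeriv volume x ≠ ⊤) ∧
      S.measure (Set.Ioo a b) ≤ ENNReal.ofReal (f b - f a) := by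
  have hmem : ∀ x : ℝ, min (max x a) b ∈ Set.Icc a b := fun x =>
    ⟨le_min (le_max_right _ _) hab, min_le_right _ _⟩
  have hgc : Continuous (fun x => f (min (max x a) b)) := by
    apply hc.comp_continuous (by fun_prop) hmem
  have hgm : Monotone (fun x => f (min (max x a) b)) := by
    intro x y hxy
    exact hm (hmem x) (hmem y) (min_le_min (max_le_max hxy le_rfl) le_rfl)
  set S : StieltjesFunction ℝ :=
    { toFun := fun x => f (min (max x a) b)
      mono' := hgm
      right_continuous' := fun x => hgc.continuousAt.continuousWithinAt } with hS
  refine ⟨S, ?_, ?_⟩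
  · filter_upwards [S.ae_hasDerivAt, Measure.rnDeriv_lt_top S.measure volume] with x hx hx' hmemx
    refine ⟨?_, hx'.ne⟩
    apply hx.congr_of_eventuallyEq
    filter_upwards [isOpen_Ioo.mem_nhds hmemx] with y hy
    have : min (max y a) b = y := by
      rw [max_eq_left hy.1.le, min_eq_left hy.2.le]
    show f y = f (min (max y a) b)
    rw [this]
  · refine (measure_mono Set.Ioo_subset_Ioc_self).trans ?_
    rw [S.measure_Ioc]
    have hSb : S b = f b := by
      show f (min (max b a) b) = f b
      rw [max_eq_left hab, min_self]
    have hSa : S a = f a := by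
      show f (min (max a a) b) = f a
      rw [max_self, min_eq_left hab]
    rw [hSb, hSa]

lemma lintegral_ae_deriv_le {f : ℝ → ℝ} {G : ℝ → ℝ≥0∞} {a b : ℝ} (hab : a ≤ b)
    (hm : MonotoneOn f (Set.Icc a b)) (hc : ContinuousOn f (Set.Icc a b))
    (hae : ∀ᵐ x, x ∈ Set.Ioo a b → ∃ d, HasDerivAt f d x ∧ G x = ENNReal.ofReal d) :
    ∫⁻ x in Set.Ioo a b, G x ≤ ENNReal.ofReal (f b - f a) := by
  obtain ⟨S, hSd, hSm⟩ := stieltjes_aux hab hm hc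
  have hcong : ∀ᵐ x, x ∈ Set.Ioo a b → G x = S.measure.rnDeriv volume x := by
    filter_upwards [hSd, hae] with x hx hx' hmemx
    obtain ⟨d, hd, hGd⟩ := hx' hmemx
    obtain ⟨hder, hfin⟩ := hx hmemx
    rw [hGd, hd.unique hder, ENNReal.ofReal_toReal hfin]
  calc ∫⁻ x in Set.Ioo a b, G x
      = ∫⁻ x in Set.Ioo a b, S.measure.rnDeriv volume x := by
        refine lintegral_congr_ae ?_
        exact (ae_restrict_iff' measurableSet_Ioo).2 hcong
    _ ≤ S.measure (Set.Ioo a b) := Measure.setLIntegral_rnDeriv_le _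
    _ ≤ ENNReal.ofReal (f b - f a) := hSm

lemma sub_ge_of_ae_deriv_ge {f : ℝ → ℝ} {a b c₀ : ℝ} (hab : a ≤ b) (hc₀ : 0 ≤ c₀)
    (hm : MonotoneOn f (Set.Icc a b)) (hc : ContinuousOn f (Set.Icc a b))
    (hae : ∀ᵐ x, x ∈ Set.Ioo a b → ∃ d, HasDerivAt f d x ∧ c₀ ≤ d) :
    c₀ * (b - a) ≤ f b - f a := by
  obtain ⟨S, hSd, hSm⟩ := stieltjes_aux hab hm hc
  have hge : ∀ᵐ x, x ∈ Set.Ioo a b → ENNReal.ofReal c₀ ≤ S.measure.rnDeriv volume x := by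
    filter_upwards [hSd, hae] with x hx hx' hmemx
    obtain ⟨d, hd, hcd⟩ := hx' hmemx
    obtain ⟨hder, hfin⟩ := hx hmemx
    have : d = (S.measure.rnDeriv volume x).toReal := hd.unique hder
    rw [← ENNReal.ofReal_toReal hfin]
    exact ENNReal.ofReal_le_ofReal (by rw [← this]; exact hcd)
  have h1 : ENNReal.ofReal c₀ * ENNReal.ofReal (b - a)
      ≤ ENNReal.ofReal (f b - f a) := by
    calc ENNReal.ofReal c₀ * ENNReal.ofReal (b - a)
        = ∫⁻ _x in Set.Ioo a b, ENNReal.ofReal c₀ := by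
          rw [setLIntegral_const, Real.volume_Ioo]
      _ ≤ ∫⁻ x in Set.Ioo a b, S.measure.rnDeriv volume x := by
          refine lintegral_mono_ae ?_
          exact (ae_restrict_iff' measurableSet_Ioo).2 hge
      _ ≤ S.measure (Set.Ioo a b) := Measure.setLIntegral_rnDeriv_le _
      _ ≤ ENNReal.ofReal (f b - f a) := hSm
  rw [← ENNReal.ofReal_mul hc₀] at h1
  have hfb : f a ≤ f b := hm (Set.left_mem_Icc.2 hab) (Set.right_mem_Icc.2 hab) hab
  exact (ENNReal.ofReal_le_ofReal_iff (by linarith)).1 h1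

lemma Astep {f : ℝ → ℝ} {c s t : ℝ} (hc : 0 < c) (hs : 0 < s) (hst : s ≤ t)
    (hm : MonotoneOn f (Set.Icc s t)) (hcont : ContinuousOn f (Set.Icc s t))
    (hpos : 0 < f s)
    (hae : ∀ᵐ h, h ∈ Set.Ioo s t → ∃ d, HasDerivAt f d h ∧
      f h * (1 - f h) ≤ (h + c * f h ^ 2) * d) :
    t / f t - t - c * f t ≤ s / f s - s - c * f s := by
  have hfpos : ∀ x ∈ Set.Icc s t, 0 < f x := fun x hx =>
    lt_of_lt_of_le hpos (hm (Set.left_mem_Icc.2 hst) hx hx.1)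
  set m : ℝ → ℝ := fun h => h * ((f s)⁻¹ - (f h)⁻¹) + h + c * f h with hmdef
  have hmm : MonotoneOn m (Set.Icc s t) := by
    intro x hx y hy hxy
    have h1 : (f x)⁻¹ ≥ (f y)⁻¹ := by
        exact (inv_le_inv₀ (hfpos y hy) (hfpos x hx)).2 (hm hx hy hxy)
    have h2 : (f s)⁻¹ - (f x)⁻¹ ≥ 0 := by
      have := one_div_le_one_div_of_le hpos (hm (Set.left_mem_Icc.2 hst) hx hx.1)
      simp only [one_div] at this; linarith
    have h3 : 0 ≤ x := (hs.trans_le hx.1).le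
    have h4 : f x ≤ f y := hm hx hy hxy
    have h5 : x * ((f s)⁻¹ - (f x)⁻¹) ≤ y * ((f s)⁻¹ - (f y)⁻¹) :=
      mul_le_mul hxy (by linarith) (by linarith) (h3.trans hxy)
    simp only [hmdef]
    nlinarith
  have hmc : ContinuousOn m (Set.Icc s t) := by
    apply ContinuousOn.add
    apply ContinuousOn.add
    · exact (continuousOn_id.mul ((continuousOn_const.sub
        (hcont.inv₀ (fun x hx => (hfpos x hx).ne')))))
    · exact continuousOn_id
    · exact continuousOn_const.mul hcont
  have key : (f s)⁻¹ * (t - s) ≤ m t - m s := by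
    apply sub_ge_of_ae_deriv_ge hst (inv_nonneg.2 hpos.le) hmm hmc
    filter_upwards [hae] with x hx hmemx
    obtain ⟨d, hd, hineq⟩ := hx hmemx
    have hxmem : x ∈ Set.Icc s t := Set.Ioo_subset_Icc_self hmemx
    have hu : 0 < f x := hfpos x hxmem
    have hinv : HasDerivAt (fun h => (f h)⁻¹) (-d / f x ^ 2) x := hd.inv hu.ne'
    have h1 : HasDerivAt (fun h => (f s)⁻¹ - (f h)⁻¹) (0 - -d / f x ^ 2) x :=
      (hasDerivAt_const x ((f s)⁻¹)).sub hinv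
    have h2 : HasDerivAt (fun h => h * ((f s)⁻¹ - (f h)⁻¹))
        (1 * ((f s)⁻¹ - (f x)⁻¹) + x * (0 - -d / f x ^ 2)) x := (hasDerivAt_id x).mul h1
    have h3 : HasDerivAt m
        (1 * ((f s)⁻¹ - (f x)⁻¹) + x * (0 - -d / f x ^ 2) + 1 + c * d) x :=
      (h2.add (hasDerivAt_id x)).add (hd.const_mul c)
    refine ⟨_, h3, ?_⟩
    have hx2 : (0:ℝ) < f x ^ 2 := pow_pos hu 2
    have e1 : (f x)⁻¹ - 1 ≤ x * (d / f x ^ 2) + c * d := by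
      have h4 : ((f x)⁻¹ - 1) * f x ^ 2 ≤ (x * (d / f x ^ 2) + c * d) * f x ^ 2 := by
        have l1 : ((f x)⁻¹ - 1) * f x ^ 2 = f x - f x ^ 2 := by
          field_simp
        have l2 : (x * (d / f x ^ 2) + c * d) * f x ^ 2 = x * d + c * d * f x ^ 2 := by
          field_simp
        rw [l1, l2]
        nlinarith
      exact le_of_mul_le_mul_right h4 hx2
    have : x * (0 - -d / f x ^ 2) = x * (d / f x ^ 2) := by ring
    rw [this]
    linarith
  have hms : m s = s + c * f s := by simp [hmdef]
  have hmt : m t = t * ((f s)⁻¹ - (f t)⁻¹) + t + c * f t := by simp [hmdef]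
  rw [hms, hmt] at key
  have htft : t / f t = t * (f t)⁻¹ := div_eq_mul_inv _ _
  have hsfs : s / f s = s * (f s)⁻¹ := div_eq_mul_inv _ _
  rw [htft, hsfs]
  nlinarith [key]

end AB17

open AB17 in
set_option maxHeartbeats 1000000 in
theorem stmt17 (M : ℝ → ℝ → ℝ) (β₀ β₁ h₁ Φ Ψ : ℝ)
    (hβ : β₀ < β₁) (hβ₀ : 0 ≤ β₀) (hh₁ : 0 < h₁) (hΦ : 0 < Φ) (hΨ : 0 < Ψ)
    (hmono1 : ∀ h ≥ (0:ℝ), MonotoneOn (fun β => M β h) (Set.Ici 0))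
    (hmono2 : ∀ β ≥ (0:ℝ), MonotoneOn (M β) (Set.Ici 0))
    (hrange : ∀ β ≥ (0:ℝ), ∀ h ≥ (0:ℝ), M β h ∈ Set.Icc (0:ℝ) 1)
    (hcont : ContinuousOn (fun p : ℝ × ℝ => M p.1 p.2) (Set.Ici 0 ×ˢ Set.Ioi 0))
    (hhalf : ∀ β ∈ Set.Icc β₀ β₁, ∀ h ∈ Set.Ioc (0:ℝ) h₁, M β h ≤ 1/2)
    (hPDI : ∀ᵐ p : ℝ × ℝ ∂(volume : Measure (ℝ × ℝ)),
      p ∈ Set.Icc β₀ β₁ ×ˢ Set.Ioc (0:ℝ) h₁ →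
      ∃ dβ dh : ℝ,
        HasDerivAt (fun β => M β p.2) dβ p.1 ∧
        HasDerivAt (M p.1) dh p.2 ∧
        dβ ≤ Φ * M p.1 p.2 * dh ∧
        M p.1 p.2 ≤ p.2 * dh + Ψ * M p.1 p.2 * dβ + (M p.1 p.2) ^ 2)
    (hlim : Tendsto (fun h => M β₀ h / h) (nhdsWithin 0 (Set.Ioi 0)) atTop) :
    (∃ c₁ > (0:ℝ), ∃ h₀ > (0:ℝ), ∀ h ∈ Set.Ioc (0:ℝ) h₀,
        c₁ * Real.sqrt h ≤ M β₀ h) ∧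
    (∃ c₂ > (0:ℝ), ∀ β ∈ Set.Icc β₀ β₁, ∀ L : ℝ,
        Tendsto (M β) (nhdsWithin 0 (Set.Ioi 0)) (nhds L) →
          c₂ * (β - β₀) ≤ L) := by
  set c : ℝ := Φ * Ψ with hcdef
  have hc : 0 < c := mul_pos hΦ hΨ
  -- eventually M β₀ h ≥ h near 0
  have hev : ∀ᶠ h in nhdsWithin 0 (Set.Ioi (0:ℝ)), h ≤ M β₀ h := by
    filter_upwards [hlim.eventually_ge_atTop 1, self_mem_nhdsWithin] with h hh hmem
    have h0 : (0:ℝ) < h := hmem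
    rw [le_div_iff₀ h0, one_mul] at hh
    exact hh
  -- positivity on the whole rectangle
  have hMpos : ∀ β ∈ Set.Icc β₀ β₁, ∀ h ∈ Set.Ioc (0:ℝ) h₁, 0 < M β h := by
    obtain ⟨u, hu, h0u⟩ := (eventually_nhdsWithin_iff.1 hev).exists_mem
    obtain ⟨ε, hε, hball⟩ := Metric.mem_nhds_iff.1 hu
    intro β hβm h hh
    set h' : ℝ := min h (ε/2) with hh'def
    have hh'pos : 0 < h' := lt_min hh.1 (by linarith)
    have hh'mem : h' ∈ Metric.ball (0:ℝ) ε := by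
      rw [Metric.mem_ball, Real.dist_eq, sub_zero, abs_of_pos hh'pos]
      exact lt_of_le_of_lt (min_le_right _ _) (by linarith)
    have h1 : h' ≤ M β₀ h' := h0u _ (hball hh'mem) hh'pos
    have h2 : M β₀ h' ≤ M β₀ h := hmono2 β₀ hβ₀ hh'pos.le hh.1.le (min_le_left _ _)
    have h3 : M β₀ h ≤ M β h := hmono1 h hh.1.le hβ₀ (hβ₀.trans hβm.1) hβm.1
    linarith
  -- ratio tends to 0
  have hratio : Tendsto (fun s => s / M β₀ s) (nhdsWithin 0 (Set.Ioi (0:ℝ))) (nhds 0) := by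
    have h1 := hlim.inv_tendsto_atTop
    apply h1.congr'
    filter_upwards [hev, self_mem_nhdsWithin] with h hh hmem
    have h0 : (0:ℝ) < h := hmem
    simp only [Pi.inv_apply]
    rw [inv_div]
  -- a.e. slices
  have hPDI' : ∀ᵐ β' ∂(volume : Measure ℝ), ∀ᵐ h ∂(volume : Measure ℝ),
      (β', h) ∈ Set.Icc β₀ β₁ ×ˢ Set.Ioc (0:ℝ) h₁ →
      ∃ dβ dh : ℝ,
        HasDerivAt (fun β => M β h) dβ β' ∧
        HasDerivAt (M β') dh h ∧
        dβ ≤ Φ * M β' h * dh ∧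
        M β' h ≤ h * dh + Ψ * M β' h * dβ + (M β' h) ^ 2 := by
    have := hPDI
    rw [Measure.volume_eq_prod] at this
    exact Measure.ae_ae_of_ae_prod this
  -- slice continuity
  have hslicecont : ∀ β' ≥ (0:ℝ), ∀ s t : ℝ, 0 < s →
      ContinuousOn (M β') (Set.Icc s t) := by
    intro β' hβ' s t hs
    have hpair : ContinuousOn (fun h : ℝ => (β', h)) (Set.Icc s t) :=
      (continuous_const.prodMk continuous_id).continuousOn
    have hmaps : Set.MapsTo (fun h : ℝ => (β', h)) (Set.Icc s t) (Set.Ici 0 ×ˢ Set.Ioi 0) :=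
      fun h hh => ⟨hβ', lt_of_lt_of_le hs hh.1⟩
    have h2 := ContinuousOn.comp hcont hpair hmaps
    exact h2
  -- the key part-1 bound for a.e.-good slices
  have hgood : ∀ β' ∈ Set.Ioc β₀ β₁,
      (∀ᵐ h ∂(volume : Measure ℝ),
        (β', h) ∈ Set.Icc β₀ β₁ ×ˢ Set.Ioc (0:ℝ) h₁ →
        ∃ dβ dh : ℝ,
          HasDerivAt (fun β => M β h) dβ β' ∧
          HasDerivAt (M β') dh h ∧
          dβ ≤ Φ * M β' h * dh ∧
          M β' h ≤ h * dh + Ψ * M β' h * dβ + (M β' h) ^ 2) →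
      ∀ t ∈ Set.Ioc (0:ℝ) h₁, Real.sqrt (t * (2*c)⁻¹) ≤ M β' t := by
    intro β' hβ'mem hβae t ht
    have hβ'0 : (0:ℝ) ≤ β' := hβ₀.trans hβ'mem.1.le
    have hβ'Icc : β' ∈ Set.Icc β₀ β₁ := ⟨hβ'mem.1.le, hβ'mem.2⟩
    set f : ℝ → ℝ := M β' with hfdef
    have hAle : ∀ s ∈ Set.Ioo (0:ℝ) t, t / f t - t - c * f t ≤ s / M β₀ s := by
      intro s hs
      have hApre : t / f t - t - c * f t ≤ s / f s - s - c * f s := by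
        apply Astep hc hs.1 hs.2.le
          ((hmono2 β' hβ'0).mono (fun x hx => (hs.1.trans_le hx.1).le))
          (hslicecont β' hβ'0 s t hs.1)
          (hMpos β' hβ'Icc s ⟨hs.1, hs.2.le.trans ht.2⟩)
        filter_upwards [hβae] with x hx hmemx
        have hxIoc : x ∈ Set.Ioc (0:ℝ) h₁ := ⟨hs.1.trans hmemx.1, hmemx.2.le.trans ht.2⟩
        obtain ⟨dβ, dh, hdβ, hdh, hp1, hp2⟩ := hx ⟨hβ'Icc, hxIoc⟩
        refine ⟨dh, hdh, ?_⟩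
        have hM0 : 0 ≤ M β' x := (hrange β' hβ'0 x hxIoc.1.le).1
        have h4 : Ψ * M β' x * dβ ≤ Ψ * M β' x * (Φ * M β' x * dh) := by
          apply mul_le_mul_of_nonneg_left hp1 (by positivity)
        have : M β' x ≤ x * dh + c * M β' x ^ 2 * dh + M β' x ^ 2 := by
          rw [hcdef]; nlinarith
        nlinarith
      have hfspos : 0 < f s := hMpos β' hβ'Icc s ⟨hs.1, hs.2.le.trans ht.2⟩
      have hM0pos : 0 < M β₀ s := hMpos β₀ ⟨le_rfl, hβ.le⟩ s ⟨hs.1, hs.2.le.trans ht.2⟩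
      have hM0le : M β₀ s ≤ f s := hmono1 s hs.1.le hβ₀ hβ'0 hβ'mem.1.le
      have h5 : s / f s ≤ s / M β₀ s := by
        apply div_le_div_of_nonneg_left hs.1.le hM0pos hM0le
      have h6 : 0 ≤ s + c * f s := by nlinarith [mul_pos hc hfspos, hs.1]
      linarith
    have hA0 : t / f t - t - c * f t ≤ 0 := by
      refine ge_of_tendsto hratio ?_
      filter_upwards [Ioo_mem_nhdsGT_of_mem (Set.left_mem_Ico.2 ht.1)] with s hs
      exact hAle s hs
    have hft : 0 < f t := hMpos β' hβ'Icc t ht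
    have hfhalf : f t ≤ 1/2 := hhalf β' hβ'Icc t ht
    have h7 : t * (2*c)⁻¹ ≤ f t ^ 2 := by
      have h8 : t / f t ≤ t + c * f t := by linarith
      rw [div_le_iff₀ hft] at h8
      have h9 : t * (1 - f t) ≤ c * f t ^ 2 := by nlinarith
      have h10 : t * (1/2) ≤ c * f t ^ 2 := by nlinarith [ht.1]
      rw [inv_eq_one_div, mul_one_div, div_le_iff₀ (by linarith : (0:ℝ) < 2*c)]
      nlinarith [h10]
    have : Real.sqrt (t * (2*c)⁻¹) ≤ Real.sqrt (f t ^ 2) := Real.sqrt_le_sqrt h7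
    rwa [Real.sqrt_sq hft.le] at this
  -- name c₁ and global part-1 bound
  set c₁ : ℝ := Real.sqrt ((2*c)⁻¹) with hc₁def
  have hc₁pos : 0 < c₁ := Real.sqrt_pos.2 (by positivity)
  have hsqrt_eq : ∀ t : ℝ, 0 ≤ t → Real.sqrt (t * (2*c)⁻¹) = c₁ * Real.sqrt t := by
    intro t ht
    rw [Real.sqrt_mul ht, hc₁def, mul_comm]
  -- good slices exist arbitrarily close to β₀
  have hexists_good : ∀ x, β₀ < x → ∃ β' ∈ Set.Ioc β₀ (min x β₁),
      ∀ t ∈ Set.Ioc (0:ℝ) h₁, Real.sqrt (t * (2*c)⁻¹) ≤ M β' t := by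
    intro x hx
    by_contra hcon
    push_neg at hcon
    have hsub : Set.Ioc β₀ (min x β₁) ⊆
        {β' | ¬ ((∀ᵐ h ∂(volume : Measure ℝ),
          (β', h) ∈ Set.Icc β₀ β₁ ×ˢ Set.Ioc (0:ℝ) h₁ →
          ∃ dβ dh : ℝ,
            HasDerivAt (fun β => M β h) dβ β' ∧
            HasDerivAt (M β') dh h ∧
            dβ ≤ Φ * M β' h * dh ∧
            M β' h ≤ h * dh + Ψ * M β' h * dβ + (M β' h) ^ 2))} := by
      intro β' hβ'
      intro hae
      obtain ⟨t, ht, hviol⟩ := hcon β' hβ'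
      exact absurd (hgood β' ⟨hβ'.1, hβ'.2.trans (min_le_right _ _)⟩ hae t ht) (not_le.2 hviol)
    have hnull : (volume : Measure ℝ) {β' | ¬ ((∀ᵐ h ∂(volume : Measure ℝ),
          (β', h) ∈ Set.Icc β₀ β₁ ×ˢ Set.Ioc (0:ℝ) h₁ →
          ∃ dβ dh : ℝ,
            HasDerivAt (fun β => M β h) dβ β' ∧
            HasDerivAt (M β') dh h ∧
            dβ ≤ Φ * M β' h * dh ∧
            M β' h ≤ h * dh + Ψ * M β' h * dβ + (M β' h) ^ 2))} = 0 := hPDI'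
    have hposmeas : 0 < (volume : Measure ℝ) (Set.Ioc β₀ (min x β₁)) := by
      rw [Real.volume_Ioc]
      have : β₀ < min x β₁ := lt_min hx hβ
      simp only [ENNReal.ofReal_pos]
      linarith
    exact absurd (le_antisymm ((measure_mono hsub).trans hnull.le) (by simp)) hposmeas.ne'
  -- part 1 at β₀ by continuity
  have hpart1β₀ : ∀ t ∈ Set.Ioc (0:ℝ) h₁, Real.sqrt (t * (2*c)⁻¹) ≤ M β₀ t := by
    intro t ht
    have hseq : ∀ n : ℕ, ∃ β' ∈ Set.Ioc β₀ (min (β₀ + ((n:ℝ)+1)⁻¹) β₁),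
        ∀ t' ∈ Set.Ioc (0:ℝ) h₁, Real.sqrt (t' * (2*c)⁻¹) ≤ M β' t' := by
      intro n
      have hp : (0:ℝ) < ((n:ℝ)+1)⁻¹ := by positivity
      exact hexists_good (β₀ + ((n:ℝ)+1)⁻¹) (by linarith)
    choose bs hbs1 hbs2 using hseq
    have hbs_ge : ∀ n, β₀ < bs n := fun n => (hbs1 n).1
    have hbs_le : ∀ n, bs n ≤ β₀ + ((n:ℝ)+1)⁻¹ := fun n => (hbs1 n).2.trans (min_le_left _ _)
    have htend : Tendsto bs atTop (nhds β₀) := by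
      have h1 : Tendsto (fun n : ℕ => β₀ + ((n:ℝ)+1)⁻¹) atTop (nhds β₀) := by
        have := tendsto_one_div_add_atTop_nhds_zero_nat (𝕜 := ℝ)
        simp only [one_div] at this
        simpa using tendsto_const_nhds.add this
      exact tendsto_of_tendsto_of_tendsto_of_le_of_le tendsto_const_nhds h1
        (fun n => (hbs_ge n).le) hbs_le
    have hcw : ContinuousWithinAt (fun p : ℝ × ℝ => M p.1 p.2)
        (Set.Ici 0 ×ˢ Set.Ioi 0) (β₀, t) := hcont _ ⟨hβ₀, ht.1⟩
    have hptend : Tendsto (fun n => ((bs n : ℝ), t))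
        atTop (nhdsWithin (β₀, t) (Set.Ici 0 ×ˢ Set.Ioi 0)) := by
      apply tendsto_nhdsWithin_of_tendsto_nhds_of_eventually_within
      · exact htend.prodMk_nhds tendsto_const_nhds
      · filter_upwards with n
        exact ⟨hβ₀.trans (hbs_ge n).le, ht.1⟩
    have hMtend : Tendsto (fun n => M (bs n) t) atTop (nhds (M β₀ t)) := hcw.tendsto.comp hptend
    refine ge_of_tendsto hMtend ?_
    filter_upwards with n
    exact hbs2 n t ht
  have hpart1_all : ∀ β ∈ Set.Icc β₀ β₁, ∀ t ∈ Set.Ioc (0:ℝ) h₁,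
      c₁ * Real.sqrt t ≤ M β t := by
    intro β hβm t ht
    have h1 := hpart1β₀ t ht
    rw [hsqrt_eq t ht.1.le] at h1
    exact h1.trans (hmono1 t ht.1.le hβ₀ (hβ₀.trans hβm.1) hβm.1)
  constructor
  · exact ⟨c₁, hc₁pos, h₁, hh₁, fun h hh => hpart1_all β₀ ⟨le_rfl, hβ.le⟩ h hh⟩
  -- ============ PART 2 ============
  classical
  -- measurable extension of M
  set Q : Set (ℝ × ℝ) := {p : ℝ × ℝ | 0 < p.2} with hQdef
  have hQopen : IsOpen Q := isOpen_lt continuous_const continuous_snd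
  set W : ℝ × ℝ → ℝ := Q.piecewise (fun p => M (max p.1 0) p.2) (fun _ => 0) with hWdef
  have hWcOn : ContinuousOn (fun p : ℝ × ℝ => M (max p.1 0) p.2) Q := by
    have hpair : ContinuousOn (fun p : ℝ × ℝ => ((max p.1 0 : ℝ), p.2)) Q :=
      ((continuous_fst.max continuous_const).prodMk continuous_snd).continuousOn
    have hmaps : Set.MapsTo (fun p : ℝ × ℝ => ((max p.1 0 : ℝ), p.2)) Q
        (Set.Ici 0 ×ˢ Set.Ioi 0) := fun p hp => ⟨show (0:ℝ) ≤ max p.1 0 from le_max_right _ _, hp⟩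
    have h2 := ContinuousOn.comp hcont hpair hmaps
    exact h2
  have hWmeas : Measurable W :=
    ContinuousOn.measurable_piecewise hWcOn continuousOn_const hQopen.measurableSet
  have hWeq : ∀ β' : ℝ, 0 ≤ β' → ∀ h : ℝ, 0 < h → W (β', h) = M β' h := by
    intro β' hβ' h hh
    rw [hWdef, Set.piecewise_eq_of_mem _ _ _ (show ((β',h) : ℝ × ℝ) ∈ Q from hh)]
    simp only [max_eq_left hβ']
  -- measurable a.e.-derivative surrogate
  set mq : ℕ → ℝ × ℝ → ℝ := fun n p =>
    (Real.log (W p) - Real.log (W (p.1, p.2 - min ((n:ℝ)+1)⁻¹ (p.2/2)))) *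
      (min ((n:ℝ)+1)⁻¹ (p.2/2))⁻¹ with hmqdef
  have hmqmeas : ∀ n, Measurable (mq n) := by
    intro n
    apply Measurable.mul
    · apply Measurable.sub
      · exact Real.measurable_log.comp hWmeas
      · exact Real.measurable_log.comp (hWmeas.comp (measurable_fst.prodMk
          (measurable_snd.sub (measurable_const.min (measurable_snd.div_const 2)))))
    · exact (measurable_const.min (measurable_snd.div_const 2)).inv
  set g : ℝ × ℝ → ℝ≥0∞ := fun p =>
    Filter.limsup (fun n => ENNReal.ofReal (mq n p)) atTop with hgdef
  have hgmeas : Measurable g :=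
    Measurable.limsup (fun n => ENNReal.measurable_ofReal.comp (hmqmeas n))
  -- g matches the log-derivative
  have hgmatch : ∀ β' ∈ Set.Icc β₀ β₁, ∀ h ∈ Set.Ioc (0:ℝ) h₁, ∀ dh : ℝ,
      HasDerivAt (M β') dh h → g (β', h) = ENNReal.ofReal (dh / M β' h) := by
    intro β' hβ'm h hhm dh hd
    have hβ'0 : (0:ℝ) ≤ β' := hβ₀.trans hβ'm.1
    have hMh : 0 < M β' h := hMpos β' hβ'm h hhm
    have hlog : HasDerivAt (fun y => Real.log (M β' y)) (dh / M β' h) h := hd.log hMh.ne'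
    set δn : ℕ → ℝ := fun n => min ((n:ℝ)+1)⁻¹ (h/2) with hδdef
    have hδpos : ∀ n, 0 < δn n := fun n => lt_min (by positivity) (by linarith [hhm.1])
    have hδle : ∀ n, δn n ≤ ((n:ℝ)+1)⁻¹ := fun n => min_le_left _ _
    have hδto : Tendsto δn atTop (nhds 0) := by
      have h1 : Tendsto (fun n : ℕ => ((n:ℝ)+1)⁻¹) atTop (nhds 0) := by
        have := tendsto_one_div_add_atTop_nhds_zero_nat (𝕜 := ℝ)
        simpa [one_div] using this
      exact tendsto_of_tendsto_of_tendsto_of_le_of_le tendsto_const_nhds h1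
        (fun n => (hδpos n).le) hδle
    have hyto : Tendsto (fun n => h - δn n) atTop
        (nhdsWithin h {x | x ≠ h}) := by
      apply tendsto_nhdsWithin_of_tendsto_nhds_of_eventually_within
      · simpa using tendsto_const_nhds.sub hδto
      · filter_upwards with n
        exact (by linarith [hδpos n] : h - δn n < h).ne
    have hslope : Tendsto (fun n => slope (fun y => Real.log (M β' y)) h (h - δn n))
        atTop (nhds (dh / M β' h)) :=
      (hasDerivAt_iff_tendsto_slope.1 hlog).comp hyto
    have hmqeq : ∀ n, mq n (β', h) = slope (fun y => Real.log (M β' y)) h (h - δn n) := by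
      intro n
      have hy : (0:ℝ) < h - δn n := by
        have := min_le_right ((n:ℝ)+1)⁻¹ (h/2)
        have h2 : δn n ≤ h/2 := this
        linarith [hhm.1]
      rw [slope_def_field, hmqdef]
      simp only
      rw [hWeq β' hβ'0 h hhm.1, hWeq β' hβ'0 _ hy]
      have e3 : (h - δn n - h) = -(δn n) := by ring
      rw [e3]
      simp only [hδdef]
      rw [div_neg, div_eq_mul_inv]
      ring
    have htends : Tendsto (fun n => ENNReal.ofReal (mq n (β', h))) atTop
        (nhds (ENNReal.ofReal (dh / M β' h))) := by
      apply (ENNReal.continuous_ofReal.tendsto _).comp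
      exact hslope.congr (fun n => (hmqeq n).symm)
    rw [hgdef]
    exact htends.limsup_eq
  -- swapped Fubini
  have hPDIsw : ∀ᵐ h ∂(volume : Measure ℝ), ∀ᵐ β' ∂(volume : Measure ℝ),
      ((β', h) ∈ Set.Icc β₀ β₁ ×ˢ Set.Ioc (0:ℝ) h₁ →
      ∃ dβ dh : ℝ,
        HasDerivAt (fun β => M β h) dβ β' ∧
        HasDerivAt (M β') dh h ∧
        dβ ≤ Φ * M β' h * dh ∧
        M β' h ≤ h * dh + Ψ * M β' h * dβ + (M β' h) ^ 2) := by
    have h0 := hPDI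
    rw [Measure.volume_eq_prod] at h0
    have h1 := (Measure.measurePreserving_swap (μ := (volume : Measure ℝ))
      (ν := (volume : Measure ℝ))).quasiMeasurePreserving.ae h0
    exact Measure.ae_ae_of_ae_prod h1
  by_cases hcase : ∃ B ∈ Set.Ioc β₀ β₁, ∃ δ₀ ∈ Set.Ioc (0:ℝ) h₁, M B δ₀ < 1/8
  case neg =>
    push_neg at hcase
    refine ⟨(β₁ - β₀)⁻¹ * (1/8), by
      have hd : (0:ℝ) < β₁ - β₀ := by linarith
      positivity, ?_⟩
    intro β hβm L hL
    rcases eq_or_lt_of_le hβm.1 with heq | hlt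
    · have hL0 : (0:ℝ) ≤ L := by
        refine ge_of_tendsto hL ?_
        filter_upwards [self_mem_nhdsWithin] with x hx
        exact (hrange β (hβ₀.trans hβm.1) x (le_of_lt hx)).1
      rw [← heq]
      simpa using hL0
    · have hL8 : 1/8 ≤ L := by
        refine ge_of_tendsto hL ?_
        filter_upwards [Ioo_mem_nhdsGT_of_mem (Set.left_mem_Ico.2 hh₁)] with x hx
        exact hcase β ⟨hlt, hβm.2⟩ x ⟨hx.1, hx.2.le⟩
      have h1 : (β₁ - β₀)⁻¹ * (1/8) * (β - β₀) ≤ 1/8 := by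
        rw [mul_comm ((β₁ - β₀)⁻¹) (1/8), mul_assoc]
        have h2 : (β₁ - β₀)⁻¹ * (β - β₀) ≤ 1 := by
          rw [← div_eq_inv_mul]
          apply div_le_one_of_le₀ (by linarith [hβm.2]) (by linarith)
        nlinarith
      linarith
  case pos =>
    obtain ⟨B, hBmem, δ₀, hδ₀mem, hBsmall⟩ := hcase
    have hrectsmall : ∀ β' ∈ Set.Icc β₀ B, ∀ h ∈ Set.Ioc (0:ℝ) δ₀, M β' h < 1/8 := by
      intro β' hβ' h hh
      have hβ'0 : (0:ℝ) ≤ β' := hβ₀.trans hβ'.1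
      have h1 : M β' h ≤ M β' δ₀ := hmono2 β' hβ'0 hh.1.le hδ₀mem.1.le hh.2
      have h2 : M β' δ₀ ≤ M B δ₀ :=
        hmono1 δ₀ hδ₀mem.1.le hβ'0 (hβ₀.trans hBmem.1.le) hβ'.2
      linarith
    have hB0 : (0:ℝ) ≤ B := hβ₀.trans hBmem.1.le
    have hcore : ∀ β ∈ Set.Ioc β₀ B, ∀ ρ : ℝ, 0 < ρ → ρ ≤ δ₀ →
        ∃ h ∈ Set.Ioc (0:ℝ) ρ, (β - β₀) / (4*Ψ) ≤ M β h := by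
      intro β hβIoc ρ hρpos hρδ
      have hΔ : (0:ℝ) < β - β₀ := by linarith [hβIoc.1]
      have hββ₁ : β ≤ β₁ := hβIoc.2.trans hBmem.2
      have hρh₁ : ρ ≤ h₁ := hρδ.trans hδ₀mem.2
      set a : ℝ := (5/8) * (β - β₀) with hadef
      have hapos : 0 < a := by rw [hadef]; nlinarith
      have hsel : ∃ h ∈ Set.Ioc (0:ℝ) ρ,
          (∀ᵐ β' ∂(volume : Measure ℝ),
            ((β', h) ∈ Set.Icc β₀ β₁ ×ˢ Set.Ioc (0:ℝ) h₁ →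
            ∃ dβ dh : ℝ,
              HasDerivAt (fun β => M β h) dβ β' ∧
              HasDerivAt (M β') dh h ∧
              dβ ≤ Φ * M β' h * dh ∧
              M β' h ≤ h * dh + Ψ * M β' h * dβ + (M β' h) ^ 2)) ∧
          (∫⁻ β' in Set.Ioo β₀ β, g (β', h)) ≤ ENNReal.ofReal (a / h) := by
        by_contra hcon
        push_neg at hcon
        have hGlow : ∀ᵐ h ∂(volume : Measure ℝ), h ∈ Set.Ioc (0:ℝ) ρ →
            ENNReal.ofReal (a / h) ≤ ∫⁻ β' in Set.Ioo β₀ β, g (β', h) := by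
          filter_upwards [hPDIsw] with h hae hmem
          exact (hcon h hmem hae).le
        set C : ℝ := Real.log (1/8) - Real.log c₁ with hCdef
        set ε : ℝ := min (ρ/2) (min (Real.exp (5*Real.log ρ - 8*C - 1)) ((8*c₁)⁻¹^2)) with hεdef
        have hεpos : 0 < ε := lt_min (by linarith) (lt_min (Real.exp_pos _) (by positivity))
        have hερ : ε < ρ := (min_le_left _ _).trans_lt (by linarith)
        have hεlog : Real.log ε ≤ 5*Real.log ρ - 8*C - 1 := by
          have h1 : ε ≤ Real.exp (5*Real.log ρ - 8*C - 1) :=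
            (min_le_right _ _).trans (min_le_left _ _)
          calc Real.log ε ≤ Real.log (Real.exp (5*Real.log ρ - 8*C - 1)) :=
                Real.log_le_log hεpos h1
            _ = _ := Real.log_exp _
        have hsqεpos : 0 < Real.sqrt ε := Real.sqrt_pos.2 hεpos
        have hεsqrt : c₁ * Real.sqrt ε ≤ 1/8 := by
          have h1 : ε ≤ ((8*c₁)⁻¹)^2 := (min_le_right _ _).trans (min_le_right _ _)
          have h2 : Real.sqrt ε ≤ (8*c₁)⁻¹ := by
            calc Real.sqrt ε ≤ Real.sqrt (((8*c₁)⁻¹)^2) := Real.sqrt_le_sqrt h1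
              _ = (8*c₁)⁻¹ := Real.sqrt_sq (by positivity)
          calc c₁ * Real.sqrt ε ≤ c₁ * (8*c₁)⁻¹ :=
                mul_le_mul_of_nonneg_left h2 hc₁pos.le
            _ = 1/8 := by
                field_simp
        have hKnn : 0 ≤ Real.log (1/8) - Real.log (c₁ * Real.sqrt ε) := by
          have h1 : 0 < c₁ * Real.sqrt ε := mul_pos hc₁pos hsqεpos
          have := Real.log_le_log h1 hεsqrt
          linarith
        have hintval : ∫ h in Set.Ioo ε ρ, a / h = a * (Real.log ρ - Real.log ε) := by
          rw [← MeasureTheory.integral_Ioc_eq_integral_Ioo,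
            ← intervalIntegral.integral_of_le hερ.le]
          simp_rw [div_eq_mul_inv]
          rw [intervalIntegral.integral_const_mul, integral_inv_of_pos hεpos (hεpos.trans hερ),
            Real.log_div (hεpos.trans hερ).ne' hεpos.ne']
        have hInt : MeasureTheory.IntegrableOn (fun h => a / h) (Set.Ioo ε ρ) := by
          apply (ContinuousOn.integrableOn_Icc ?_).mono_set Set.Ioo_subset_Icc_self
          apply ContinuousOn.div continuousOn_const continuousOn_id
          intro x hx; exact (hεpos.trans_le hx.1).ne'
        have hlow : ENNReal.ofReal (a * (Real.log ρ - Real.log ε)) ≤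
            ∫⁻ h in Set.Ioo ε ρ, ∫⁻ β' in Set.Ioo β₀ β, g (β', h) := by
          rw [← hintval, MeasureTheory.ofReal_integral_eq_lintegral_ofReal hInt ?_]
          · apply lintegral_mono_ae
            rw [ae_restrict_iff' measurableSet_Ioo]
            filter_upwards [hGlow] with h himp hmem
            exact himp ⟨hεpos.trans hmem.1, hmem.2.le⟩
          · rw [EventuallyLE, ae_restrict_iff' measurableSet_Ioo]
            filter_upwards with h hmem
            have : 0 < h := hεpos.trans hmem.1
            positivity
        have hswap2 : ∫⁻ h in Set.Ioo ε ρ, ∫⁻ β' in Set.Ioo β₀ β, g (β', h)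
            = ∫⁻ β' in Set.Ioo β₀ β, ∫⁻ h in Set.Ioo ε ρ, g (β', h) :=
          lintegral_lintegral_swap ((hgmeas.comp measurable_swap).aemeasurable)
        have hup : ∀ᵐ β' ∂(volume : Measure ℝ), β' ∈ Set.Ioo β₀ β →
            (∫⁻ h in Set.Ioo ε ρ, g (β', h)) ≤
              ENNReal.ofReal (Real.log (1/8) - Real.log (c₁ * Real.sqrt ε)) := by
          filter_upwards [hPDI'] with β' hae hmem
          have hβ'Icc : β' ∈ Set.Icc β₀ β₁ := ⟨hmem.1.le, hmem.2.le.trans hββ₁⟩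
          have hβ'0 : (0:ℝ) ≤ β' := hβ₀.trans hβ'Icc.1
          have hmono : MonotoneOn (fun y => Real.log (M β' y)) (Set.Icc ε ρ) := by
            intro x hx y hy hxy
            have hx0 : 0 < x := hεpos.trans_le hx.1
            apply Real.log_le_log (hMpos β' hβ'Icc x ⟨hx0, hx.2.trans hρh₁⟩)
            exact hmono2 β' hβ'0 hx0.le (hx0.le.trans hxy) hxy
          have hcont' : ContinuousOn (fun y => Real.log (M β' y)) (Set.Icc ε ρ) := by
            apply ContinuousOn.log (hslicecont β' hβ'0 ε ρ hεpos)
            intro x hx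
            exact (hMpos β' hβ'Icc x ⟨hεpos.trans_le hx.1, hx.2.trans hρh₁⟩).ne'
          have hae2 : ∀ᵐ x, x ∈ Set.Ioo ε ρ →
              ∃ d, HasDerivAt (fun y => Real.log (M β' y)) d x ∧
                g (β', x) = ENNReal.ofReal d := by
            filter_upwards [hae] with x hx hxm
            have hxIoc : x ∈ Set.Ioc (0:ℝ) h₁ := ⟨hεpos.trans hxm.1, hxm.2.le.trans hρh₁⟩
            obtain ⟨dβ, dh, hdβ, hdh, hp1, hp2⟩ := hx ⟨hβ'Icc, hxIoc⟩
            exact ⟨dh / M β' x, hdh.log (hMpos β' hβ'Icc x hxIoc).ne',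
              hgmatch β' hβ'Icc x hxIoc dh hdh⟩
          have hle := lintegral_ae_deriv_le (G := fun x => g (β', x)) hερ.le hmono hcont' hae2
          refine hle.trans (ENNReal.ofReal_le_ofReal ?_)
          have h1 : M β' ρ < 1/8 := hrectsmall β' ⟨hβ'Icc.1, hmem.2.le.trans hβIoc.2⟩ ρ ⟨hρpos, hρδ⟩
          have h2 : c₁ * Real.sqrt ε ≤ M β' ε := hpart1_all β' hβ'Icc ε ⟨hεpos, hερ.le.trans hρh₁⟩
          have h3 : Real.log (M β' ρ) ≤ Real.log (1/8) :=
            Real.log_le_log (hMpos β' hβ'Icc ρ ⟨hρpos, hρh₁⟩) h1.le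
          have h4 : Real.log (c₁ * Real.sqrt ε) ≤ Real.log (M β' ε) :=
            Real.log_le_log (mul_pos hc₁pos hsqεpos) h2
          linarith
        have hhigh : ∫⁻ β' in Set.Ioo β₀ β, ∫⁻ h in Set.Ioo ε ρ, g (β', h)
            ≤ ENNReal.ofReal (Real.log (1/8) - Real.log (c₁ * Real.sqrt ε)) *
              ENNReal.ofReal (β - β₀) := by
          calc ∫⁻ β' in Set.Ioo β₀ β, ∫⁻ h in Set.Ioo ε ρ, g (β', h)
              ≤ ∫⁻ _β' in Set.Ioo β₀ β,
                ENNReal.ofReal (Real.log (1/8) - Real.log (c₁ * Real.sqrt ε)) :=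
                lintegral_mono_ae ((ae_restrict_iff' measurableSet_Ioo).2 hup)
            _ = _ := by rw [setLIntegral_const, Real.volume_Ioo]
        have hcomb : a * (Real.log ρ - Real.log ε) ≤
            (Real.log (1/8) - Real.log (c₁ * Real.sqrt ε)) * (β - β₀) := by
          have hch := (hlow.trans (hswap2.le.trans hhigh))
          rw [← ENNReal.ofReal_mul hKnn] at hch
          exact (ENNReal.ofReal_le_ofReal_iff (mul_nonneg hKnn hΔ.le)).1 hch
        have hdiv : (5/8) * (Real.log ρ - Real.log ε) ≤
            Real.log (1/8) - Real.log (c₁ * Real.sqrt ε) := by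
          have h3 : ((5/8) * (Real.log ρ - Real.log ε)) * (β - β₀) ≤
              (Real.log (1/8) - Real.log (c₁ * Real.sqrt ε)) * (β - β₀) := by
            calc ((5/8) * (Real.log ρ - Real.log ε)) * (β - β₀)
                = a * (Real.log ρ - Real.log ε) := by rw [hadef]; ring
              _ ≤ _ := hcomb
          exact le_of_mul_le_mul_right h3 hΔ
        have hKexp : Real.log (c₁ * Real.sqrt ε) = Real.log c₁ + Real.log ε / 2 := by
          rw [Real.log_mul hc₁pos.ne' hsqεpos.ne', Real.log_sqrt hεpos.le]
        rw [hKexp] at hdiv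
        rw [hCdef] at hεlog
        linarith [hdiv, hεlog]
      obtain ⟨h, hhmem, hβ'ae, hGle⟩ := hsel
      refine ⟨h, hhmem, ?_⟩
      have hhIoc : h ∈ Set.Ioc (0:ℝ) h₁ := ⟨hhmem.1, hhmem.2.trans hρh₁⟩
      set F : ℝ → ℝ := fun b => M b h with hFdef
      set Gβ : ℝ → ℝ≥0∞ := fun β' =>
        if p : ∃ d, HasDerivAt F d β' then ENNReal.ofReal p.choose else 0 with hGβdef
      have haeβ : ∀ᵐ β' ∂(volume : Measure ℝ), β' ∈ Set.Ioo β₀ β →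
          (∃ d, HasDerivAt F d β' ∧ Gβ β' = ENNReal.ofReal d) ∧
          ENNReal.ofReal (7/8 * Ψ⁻¹) ≤ Gβ β' + ENNReal.ofReal (h * Ψ⁻¹) * g (β', h) := by
        filter_upwards [hβ'ae] with β' himp hmemβ'
        have hβ'Icc : β' ∈ Set.Icc β₀ β₁ := ⟨hmemβ'.1.le, hmemβ'.2.le.trans hββ₁⟩
        have hβ'0 : (0:ℝ) ≤ β' := hβ₀.trans hβ'Icc.1
        obtain ⟨dβ, dh, hdβ, hdh, hp1, hp2⟩ := himp ⟨hβ'Icc, hhIoc⟩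
        have hGβeq : Gβ β' = ENNReal.ofReal dβ := by
          have hex : ∃ d, HasDerivAt F d β' := ⟨dβ, hdβ⟩
          simp only [hGβdef]
          rw [dif_pos hex]
          congr 1
          exact hex.choose_spec.unique hdβ
        have hm0 : 0 < M β' h := hMpos β' hβ'Icc h hhIoc
        have hm8 : M β' h < 1/8 := hrectsmall β' ⟨hβ'Icc.1, hmemβ'.2.le.trans hβIoc.2⟩ h
          ⟨hhmem.1, hhmem.2.trans hρδ⟩
        have hdh0 : 0 ≤ dh := deriv_nonneg_of_monotoneOn (hmono2 β' hβ'0) hhIoc.1 hdh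
        have hdβ0 : 0 ≤ dβ :=
          deriv_nonneg_of_monotoneOn (hmono1 h hhIoc.1.le) (hβ₀.trans_lt hmemβ'.1) hdβ
        refine ⟨⟨dβ, hdβ, hGβeq⟩, ?_⟩
        have hgeq : g (β', h) = ENNReal.ofReal (dh / M β' h) :=
          hgmatch β' hβ'Icc h hhIoc dh hdh
        have hreal : 7/8 * Ψ⁻¹ ≤ dβ + (h * Ψ⁻¹) * (dh / M β' h) := by
          have hΨm : 0 < Ψ * M β' h := by positivity
          have hkey : (dβ + (h * Ψ⁻¹) * (dh / M β' h)) * (Ψ * M β' h)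
              = Ψ * M β' h * dβ + h * dh := by
            field_simp
          have h5 : M β' h * (1 - M β' h) - h * dh ≤ Ψ * M β' h * dβ := by nlinarith [hp2]
          have h6 : (7/8) * M β' h ≤ M β' h * (1 - M β' h) := by nlinarith
          have h8 : (7/8 * Ψ⁻¹) * (Ψ * M β' h) ≤
              (dβ + (h * Ψ⁻¹) * (dh / M β' h)) * (Ψ * M β' h) := by
            have he : (7/8 * Ψ⁻¹) * (Ψ * M β' h) = (7/8) * M β' h := by
              field_simp
            rw [he, hkey]
            linarith
          exact le_of_mul_le_mul_right h8 hΨm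
        calc ENNReal.ofReal (7/8 * Ψ⁻¹)
            ≤ ENNReal.ofReal (dβ + (h * Ψ⁻¹) * (dh / M β' h)) :=
              ENNReal.ofReal_le_ofReal hreal
          _ = ENNReal.ofReal dβ + ENNReal.ofReal ((h * Ψ⁻¹) * (dh / M β' h)) := by
              rw [ENNReal.ofReal_add hdβ0 (mul_nonneg
                (mul_nonneg hhIoc.1.le (inv_nonneg.2 hΨ.le)) (div_nonneg hdh0 hm0.le))]
          _ = ENNReal.ofReal dβ + ENNReal.ofReal (h * Ψ⁻¹) * ENNReal.ofReal (dh / M β' h) := by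
              rw [ENNReal.ofReal_mul (mul_nonneg hhIoc.1.le (inv_nonneg.2 hΨ.le))]
          _ = Gβ β' + ENNReal.ofReal (h * Ψ⁻¹) * g (β', h) := by rw [hGβeq, hgeq]
      have hgsec : Measurable (fun β' => g (β', h)) :=
        hgmeas.comp (measurable_id.prodMk measurable_const)
      have hFm : MonotoneOn F (Set.Icc β₀ β) := by
        intro x hx y hy hxy
        exact hmono1 h hhIoc.1.le (hβ₀.trans hx.1) (hβ₀.trans hy.1) hxy
      have hFc : ContinuousOn F (Set.Icc β₀ β) := by
        have hpair : ContinuousOn (fun b : ℝ => ((b : ℝ), h)) (Set.Icc β₀ β) :=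
          (continuous_id.prodMk continuous_const).continuousOn
        have hmaps : Set.MapsTo (fun b : ℝ => ((b : ℝ), h)) (Set.Icc β₀ β)
            (Set.Ici 0 ×ˢ Set.Ioi 0) := fun b hb => ⟨hβ₀.trans hb.1, hhIoc.1⟩
        have h2 := ContinuousOn.comp hcont hpair hmaps
        exact h2
      have hint1 : ∫⁻ β' in Set.Ioo β₀ β, Gβ β' ≤ ENNReal.ofReal (F β - F β₀) := by
        apply lintegral_ae_deriv_le hβIoc.1.le hFm hFc
        filter_upwards [haeβ] with β' hb hmem
        obtain ⟨⟨d, hd1, hd2⟩, _⟩ := hb hmem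
        exact ⟨d, hd1, hd2⟩
      have hintsum : ∫⁻ β' in Set.Ioo β₀ β, (Gβ β' + ENNReal.ofReal (h * Ψ⁻¹) * g (β', h))
          = (∫⁻ β' in Set.Ioo β₀ β, Gβ β') +
            ENNReal.ofReal (h * Ψ⁻¹) * ∫⁻ β' in Set.Ioo β₀ β, g (β', h) := by
        rw [lintegral_add_right _ (hgsec.const_mul _), lintegral_const_mul _ hgsec]
      have hlhs : ENNReal.ofReal (7/8 * Ψ⁻¹) * ENNReal.ofReal (β - β₀)
          ≤ (∫⁻ β' in Set.Ioo β₀ β, Gβ β') +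
            ENNReal.ofReal (h * Ψ⁻¹) * ∫⁻ β' in Set.Ioo β₀ β, g (β', h) := by
        rw [← hintsum]
        calc ENNReal.ofReal (7/8 * Ψ⁻¹) * ENNReal.ofReal (β - β₀)
            = ∫⁻ _β' in Set.Ioo β₀ β, ENNReal.ofReal (7/8 * Ψ⁻¹) := by
              rw [setLIntegral_const, Real.volume_Ioo]
          _ ≤ _ := lintegral_mono_ae ((ae_restrict_iff' measurableSet_Ioo).2 (by
              filter_upwards [haeβ] with β' hb hmem
              exact (hb hmem).2))
      have hterm2 : ENNReal.ofReal (h * Ψ⁻¹) * (∫⁻ β' in Set.Ioo β₀ β, g (β', h))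
          ≤ ENNReal.ofReal (a * Ψ⁻¹) := by
        calc ENNReal.ofReal (h * Ψ⁻¹) * (∫⁻ β' in Set.Ioo β₀ β, g (β', h))
            ≤ ENNReal.ofReal (h * Ψ⁻¹) * ENNReal.ofReal (a / h) := mul_le_mul' le_rfl hGle
          _ = ENNReal.ofReal ((h * Ψ⁻¹) * (a / h)) :=
              (ENNReal.ofReal_mul (mul_nonneg hhmem.1.le (inv_nonneg.2 hΨ.le))).symm
          _ = ENNReal.ofReal (a * Ψ⁻¹) := by
              rw [show (h * Ψ⁻¹) * (a / h) = a * Ψ⁻¹ from by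
                field_simp [hhmem.1.ne', hΨ.ne']]
      have hFsub : 0 ≤ F β - F β₀ := by
        have := hFm (Set.left_mem_Icc.2 hβIoc.1.le) (Set.right_mem_Icc.2 hβIoc.1.le) hβIoc.1.le
        linarith
      have hfinal' : ENNReal.ofReal (7/8 * Ψ⁻¹ * (β - β₀)) ≤
          ENNReal.ofReal ((F β - F β₀) + a * Ψ⁻¹) := by
        calc ENNReal.ofReal (7/8 * Ψ⁻¹ * (β - β₀))
            = ENNReal.ofReal (7/8 * Ψ⁻¹) * ENNReal.ofReal (β - β₀) :=
              ENNReal.ofReal_mul (mul_nonneg (by norm_num) (inv_nonneg.2 hΨ.le))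
          _ ≤ _ := hlhs
          _ ≤ ENNReal.ofReal (F β - F β₀) + ENNReal.ofReal (a * Ψ⁻¹) :=
              add_le_add hint1 hterm2
          _ = _ := (ENNReal.ofReal_add hFsub (mul_nonneg hapos.le (inv_nonneg.2 hΨ.le))).symm
      have hreal2 : 7/8 * Ψ⁻¹ * (β - β₀) ≤ (F β - F β₀) + a * Ψ⁻¹ :=
        (ENNReal.ofReal_le_ofReal_iff
          (add_nonneg hFsub (mul_nonneg hapos.le (inv_nonneg.2 hΨ.le)))).1 hfinal'
      have hM0 : 0 ≤ F β₀ := (hrange β₀ hβ₀ h hhIoc.1.le).1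
      have heq2 : (β - β₀) / (4*Ψ) = 1/4 * Ψ⁻¹ * (β - β₀) := by
        field_simp
      rw [heq2]
      have ha2 : a * Ψ⁻¹ = 5/8 * Ψ⁻¹ * (β - β₀) := by rw [hadef]; ring
      rw [ha2] at hreal2
      show 1/4 * Ψ⁻¹ * (β - β₀) ≤ M β h
      have hFβ : F β = M β h := rfl
      linarith
    -- conclude part 2 in this case
    have hBβ₀ : (0:ℝ) < B - β₀ := by linarith [hBmem.1]
    have hβ₁β₀ : (0:ℝ) < β₁ - β₀ := by linarith
    refine ⟨(B - β₀) / (4*Ψ*(β₁ - β₀)), by positivity, ?_⟩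
    intro β hβm L hL
    rcases eq_or_lt_of_le hβm.1 with heq | hlt
    · have hL0 : (0:ℝ) ≤ L := by
        refine ge_of_tendsto hL ?_
        filter_upwards [self_mem_nhdsWithin] with x hx
        exact (hrange β (hβ₀.trans hβm.1) x (le_of_lt hx)).1
      rw [← heq]
      simpa using hL0
    · set βe : ℝ := min β B with hβedef
      have hβe : βe ∈ Set.Ioc β₀ B := ⟨lt_min hlt hBmem.1, min_le_right _ _⟩
      have hβeβ : βe ≤ β := min_le_left _ _
      have hLlb : (βe - β₀) / (4*Ψ) ≤ L := by
        have hseq : ∀ n : ℕ, ∃ hh ∈ Set.Ioc (0:ℝ) (min δ₀ ((n:ℝ)+1)⁻¹),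
            (βe - β₀)/(4*Ψ) ≤ M βe hh := by
          intro n
          exact hcore βe hβe (min δ₀ ((n:ℝ)+1)⁻¹)
            (lt_min hδ₀mem.1 (by positivity)) (min_le_left _ _)
        choose hs hs1 hs2 using hseq
        have hs1' : ∀ n, 0 < hs n := fun n => (hs1 n).1
        have hsle : ∀ n, hs n ≤ ((n:ℝ)+1)⁻¹ := fun n => (hs1 n).2.trans (min_le_right _ _)
        have hstend : Tendsto hs atTop (nhdsWithin 0 (Set.Ioi 0)) := by
          apply tendsto_nhdsWithin_of_tendsto_nhds_of_eventually_within
          · apply tendsto_of_tendsto_of_tendsto_of_le_of_le tendsto_const_nhds ?_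
              (fun n => (hs1' n).le) hsle
            have := tendsto_one_div_add_atTop_nhds_zero_nat (𝕜 := ℝ)
            simpa [one_div] using this
          · filter_upwards with n
            exact hs1' n
        have hMt : Tendsto (fun n => M β (hs n)) atTop (nhds L) := hL.comp hstend
        refine ge_of_tendsto hMt ?_
        filter_upwards with n
        refine (hs2 n).trans ?_
        exact hmono1 (hs n) (hs1' n).le (hβ₀.trans hβe.1.le) (hβ₀.trans hβm.1) hβeβ
      have hkey : (B - β₀) * (β - β₀) ≤ (βe - β₀) * (β₁ - β₀) := by
        rcases le_total β B with hbb | hbb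
        · rw [hβedef, min_eq_left hbb]
          nlinarith [hBmem.2, hβm.2]
        · rw [hβedef, min_eq_right hbb]
          nlinarith [hβm.2]
      have hc4Ψ : (0:ℝ) < 4*Ψ := by linarith
      have hsc : (B - β₀) / (4*Ψ*(β₁ - β₀)) * (β - β₀) ≤ (βe - β₀) / (4*Ψ) := by
        rw [div_mul_eq_mul_div, div_le_div_iff₀ (by positivity) hc4Ψ]
        calc (B - β₀) * (β - β₀) * (4*Ψ) ≤ (βe - β₀) * (β₁ - β₀) * (4*Ψ) := by nlinarith [hkey]
          _ = (βe - β₀) * (4*Ψ*(β₁ - β₀)) := by ring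
      linarith
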